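/- Let M = C[t]⟨∂_t⟩/(t∂_t - α) with α ∈ (0,1). Then the exponentially twisted de Rham cohomology, i.e., the cohomology of the two-term complex M --(∂_t - 1)--> M, is concentrated in degree one and is one-dimensional over C. -/

import Mathlib

/-- Let `M = ℂ[t]⟨∂_t⟩/(t∂_t - α)` with `α ∈ (0, 1)`.  As a `ℂ`-vector
space, `M ≅ t^α ℂ[t, t⁻¹]` with basis `e_n = t^{n+α}` (`n ∈ ℤ`), modeled by `ℤ →₀ ℂ`,
on which `∂_t` acts as the linear map `D` with `D e_n = (n + α) e_{n-1}`.  Then the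
exponentially twisted de Rham complex `0 → M --(∂_t - 1)--> M → 0` (in degrees 0, 1)
has cohomology concentrated in degree one, of dimension one: `∂_t - 1` is injective
and its cokernel is one-dimensional. -/
theorem stmt_13 (α : ℝ) (h0 : 0 < α) (h1 : α < 1)
    (D : (ℤ →₀ ℂ) →ₗ[ℂ] (ℤ →₀ ℂ))
    (hD : ∀ n : ℤ, D (Finsupp.single n 1) = ((n : ℂ) + (α : ℂ)) • Finsupp.single (n - 1) 1) :
    LinearMap.ker (D - LinearMap.id) = ⊥ ∧
    Module.finrank ℂ ((ℤ →₀ ℂ) ⧸ LinearMap.range (D - LinearMap.id)) = 1 := by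
  set T : (ℤ →₀ ℂ) →ₗ[ℂ] (ℤ →₀ ℂ) := D - LinearMap.id with hT
  have hreal : ∀ n : ℤ, (n : ℝ) + α ≠ 0 := by
    intro n hn
    rcases le_or_gt 0 n with h | h
    · have : (0:ℝ) ≤ (n:ℝ) := by exact_mod_cast h
      linarith
    · have h' : n ≤ -1 := by omega
      have : (n:ℝ) ≤ -1 := by exact_mod_cast h'
      linarith
  have hne : ∀ n : ℤ, ((n : ℂ) + (α : ℂ)) ≠ 0 := by
    intro n hn
    apply hreal n
    have : (((n:ℝ) + α : ℝ) : ℂ) = 0 := by push_cast; push_cast at hn; exact hn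
    exact_mod_cast this
  have hGne : ∀ n : ℤ, Complex.Gamma ((n : ℂ) + α + 1) ≠ 0 := by
    intro n
    apply Complex.Gamma_ne_zero
    intro m hm
    apply hreal (n + 1 + m)
    have : (((n:ℝ) + α + 1 + m : ℝ) : ℂ) = 0 := by
      push_cast; push_cast at hm; rw [hm]; ring
    have h2 : ((n:ℝ) + α + 1 + m : ℝ) = 0 := by exact_mod_cast this
    push_cast
    linarith
  set q : ℤ → ℂ := fun n => Complex.Gamma ((n : ℂ) + α + 1) / Complex.Gamma ((α:ℂ) + 1)
    with hqdef
  have hG0 : Complex.Gamma ((α:ℂ) + 1) ≠ 0 := by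
    have := hGne 0; simpa using this
  have hq0 : q 0 = 1 := by
    simp only [hqdef, Int.cast_zero, zero_add]
    exact div_self hG0
  have hqne : ∀ n, q n ≠ 0 := fun n => div_ne_zero (hGne n) hG0
  have hqrec : ∀ n : ℤ, q n = ((n : ℂ) + α) * q (n - 1) := by
    intro n
    simp only [hqdef]
    rw [mul_div_assoc']
    congr 1
    have h3 : ((n:ℂ) + α + 1) = ((n:ℂ) + α) + 1 := by ring
    rw [h3, Complex.Gamma_add_one _ (hne n)]
    congr 2
    push_cast; ring
  have hsingle : ∀ (a : ℤ) (b : ℂ), (Finsupp.single a b : ℤ →₀ ℂ) = b • Finsupp.single a 1 := by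
    intro a b
    rw [Finsupp.smul_single, smul_eq_mul, mul_one]
  -- coefficient formula for D
  have hDf : ∀ f : ℤ →₀ ℂ, ∀ n : ℤ, (D f) n = ((n : ℂ) + 1 + α) * f (n + 1) := by
    intro f
    induction f using Finsupp.induction_linear with
    | zero => simp
    | add f g hf hg => intro n; simp only [map_add, Finsupp.add_apply, hf n, hg n]; ring
    | single a b =>
      intro n
      rw [hsingle a b, map_smul, hD a, Finsupp.smul_apply, Finsupp.smul_apply, smul_eq_mul,
        smul_eq_mul, Finsupp.smul_apply, smul_eq_mul]
      by_cases h : a = n + 1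
      · subst h
        rw [show n + 1 - 1 = n by ring, Finsupp.single_eq_same, Finsupp.single_eq_same]
        push_cast; ring
      · rw [Finsupp.single_eq_of_ne (by omega : n ≠ a - 1),
          Finsupp.single_eq_of_ne (Ne.symm h)]
        ring
  -- T on basis elements
  have hTe : ∀ n : ℤ, T (Finsupp.single n 1) =
      ((n : ℂ) + α) • Finsupp.single (n - 1) 1 - Finsupp.single n 1 := by
    intro n
    simp only [hT, LinearMap.sub_apply, LinearMap.id_apply, hD n]
  have hTmem : ∀ n : ℤ,
      (Finsupp.single n 1 - ((n : ℂ) + α) • Finsupp.single (n - 1) 1) ∈ LinearMap.range T := by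
    intro n
    exact ⟨-Finsupp.single n 1, by rw [map_neg, hTe n]; abel⟩
  constructor
  · -- injectivity
    rw [LinearMap.ker_eq_bot']
    intro f hf
    by_contra hf0
    have hDef : D f = f := by
      have h4 : D f - f = 0 := by
        simpa only [hT, LinearMap.sub_apply, LinearMap.id_apply] using hf
      exact sub_eq_zero.mp h4
    have hcoef : ∀ n : ℤ, f n = ((n : ℂ) + 1 + α) * f (n + 1) := by
      intro n
      conv_lhs => rw [← hDef]
      exact hDf f n
    have hs : f.support.Nonempty := Finsupp.support_nonempty_iff.mpr hf0
    set n₀ := f.support.min' hs with hn₀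
    have hmem : n₀ ∈ f.support := f.support.min'_mem hs
    have hfn₀ : f n₀ ≠ 0 := Finsupp.mem_support_iff.mp hmem
    have h5 : f (n₀ - 1) = ((n₀ : ℂ) + α) * f n₀ := by
      have := hcoef (n₀ - 1)
      rw [show n₀ - 1 + 1 = n₀ by ring] at this
      rw [this]
      push_cast; ring_nf
    have h6 : n₀ - 1 ∈ f.support := by
      rw [Finsupp.mem_support_iff, h5]
      exact mul_ne_zero (hne n₀) hfn₀
    have := f.support.min'_le _ h6
    omega
  · -- cokernel
    set φ : (ℤ →₀ ℂ) →ₗ[ℂ] ℂ := Finsupp.linearCombination ℂ q with hφ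
    have hφs : ∀ n : ℤ, φ (Finsupp.single n 1) = q n := by
      intro n; rw [hφ, Finsupp.linearCombination_single, one_smul]
    have hφT : ∀ g : ℤ →₀ ℂ, φ (T g) = 0 := by
      intro g
      induction g using Finsupp.induction_linear with
      | zero => simp
      | add f g hf hg => rw [map_add, map_add, hf, hg, add_zero]
      | single a b =>
        rw [hsingle a b, map_smul, map_smul, hTe a, map_sub, map_smul, hφs, hφs, smul_eq_mul,
          smul_eq_mul, ← hqrec a, sub_self, mul_zero]
    set e0 : ℤ →₀ ℂ := Finsupp.single 0 1 with he0
    have hup : ∀ n : ℤ, (Finsupp.single (n-1) 1 - q (n-1) • e0) ∈ LinearMap.range T →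
        (Finsupp.single n 1 - q n • e0) ∈ LinearMap.range T := by
      intro n ih
      have h7 : Finsupp.single n 1 - q n • e0 =
          (Finsupp.single n 1 - ((n:ℂ)+α) • Finsupp.single (n-1) 1)
          + ((n:ℂ)+α) • (Finsupp.single (n-1) 1 - q (n-1) • e0) := by
        rw [smul_sub, smul_smul, ← hqrec n]; abel
      rw [h7]; exact add_mem (hTmem n) (Submodule.smul_mem _ _ ih)
    have hdown : ∀ n : ℤ, (Finsupp.single n 1 - q n • e0) ∈ LinearMap.range T →
        (Finsupp.single (n-1) 1 - q (n-1) • e0) ∈ LinearMap.range T := by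
      intro n ih
      have h8 : Finsupp.single (n-1) 1 - q (n-1) • e0 =
          ((n:ℂ)+α)⁻¹ • (((n:ℂ)+α) • Finsupp.single (n-1) 1 - q n • e0) := by
        rw [smul_sub, smul_smul, inv_mul_cancel₀ (hne n), one_smul, smul_smul, hqrec n,
          inv_mul_cancel_left₀ (hne n)]
      have h9 : ((n:ℂ)+α) • Finsupp.single (n-1) 1 - q n • e0 =
          (Finsupp.single n 1 - q n • e0)
          - (Finsupp.single n 1 - ((n:ℂ)+α) • Finsupp.single (n-1) 1) := by abel
      rw [h8, h9]
      exact Submodule.smul_mem _ _ (sub_mem ih (hTmem n))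
    have hmemq : ∀ n : ℤ, (Finsupp.single n 1 - q n • e0) ∈ LinearMap.range T := by
      intro n
      induction n using Int.induction_on with
      | zero => rw [hq0, one_smul, he0, sub_self]; exact zero_mem _
      | succ k ih =>
        have h10 := hup ((k:ℤ)+1)
        rw [show ((k:ℤ)+1-1) = (k:ℤ) by ring] at h10
        exact h10 ih
      | pred k ih => exact hdown (-(k:ℤ)) ih
    have hall : ∀ f : ℤ →₀ ℂ, (f - φ f • e0) ∈ LinearMap.range T := by
      intro f
      induction f using Finsupp.induction_linear with
      | zero => simpa using zero_mem _
      | add f g hf hg =>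
        have h9 : (f + g - φ (f + g) • e0) = (f - φ f • e0) + (g - φ g • e0) := by
          rw [map_add, add_smul]; abel
        rw [h9]; exact add_mem hf hg
      | single a b =>
        have h10 : (Finsupp.single a b - φ (Finsupp.single a b) • e0) =
            b • (Finsupp.single a 1 - q a • e0) := by
          rw [hsingle a b, map_smul, hφs, smul_sub, smul_smul, smul_eq_mul]
        rw [h10]
        exact Submodule.smul_mem _ _ (hmemq a)
    -- finrank of quotient
    apply finrank_eq_one (Submodule.Quotient.mk e0)
    · intro hv
      rw [Submodule.Quotient.mk_eq_zero] at hv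
      obtain ⟨g, hg⟩ := hv
      have : φ e0 = 0 := by rw [← hg]; exact hφT g
      rw [he0, hφs, hq0] at this
      exact one_ne_zero this
    · intro w
      obtain ⟨f, rfl⟩ := Submodule.Quotient.mk_surjective _ w
      refine ⟨φ f, ?_⟩
      rw [← Submodule.Quotient.mk_smul, Submodule.Quotient.eq]
      simpa using Submodule.neg_mem _ (hall f)
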